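/- Let φ ∈ 𝐂, T > 0, and suppose x ∈ C([-τ,T],ℝ^d) satisfies I_T^φ(x) < ∞. Then for all t ∈ [0,T], ‖x − x^φ‖²_{[-τ,t]} ≤ 4 I_T^φ(x) κ₂ (1 + ‖x‖²_{[-τ,t]}) t exp(2κ₁ t²), where ‖y‖_{[-τ,t]} = sup_{s∈[-τ,t]}|y(s)|. -/

import Mathlib

open MeasureTheory Set Metric
open scoped ENNReal

noncomputable section

/-- `ℝ^d`. -/
abbrev Vec (d : ℕ) := EuclideanSpace ℝ (Fin d)

/-- The state space `𝐂 = C([-τ,0],ℝ^d)`. -/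
abbrev Hist (τ : ℝ) (d : ℕ) := C(Icc (-τ) (0:ℝ), Vec d)

/-- The path space `C([-τ,T],ℝ^d)`. -/
abbrev Traj (τ T : ℝ) (d : ℕ) := C(Icc (-τ) T, Vec d)

/-- Matrix acting on a vector. -/
def matVec {d m : ℕ} (M : Matrix (Fin d) (Fin m) ℝ) (v : Vec m) : Vec d :=
  WithLp.toLp 2 (fun i => ∑ j, M i j * v j)

/-- Squared Frobenius norm of a matrix. -/
def frobSq {d m : ℕ} (M : Matrix (Fin d) (Fin m) ℝ) : ℝ := ∑ i, ∑ j, (M i j) ^ 2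

/-- Frobenius norm of a matrix. -/
def frobNorm {d m : ℕ} (M : Matrix (Fin d) (Fin m) ℝ) : ℝ := Real.sqrt (frobSq M)

/-- Evaluation of a path at a time `t ∈ [-τ,T]` (clamped). -/
def ev {d : ℕ} {τ T : ℝ} (h : -τ ≤ T) (x : Traj τ T d) (t : ℝ) : Vec d :=
  x (projIcc (-τ) T h t)

/-- The history segment `x_t ∈ 𝐂` of a path `x ∈ C([-τ,T],ℝ^d)`, for `t ∈ [0,T]`. -/
def seg {d : ℕ} {τ T : ℝ} (h : -τ ≤ T) (x : Traj τ T d) (t : ℝ) : Hist τ d :=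
  ⟨fun s => x (projIcc (-τ) T h (t + s.1)),
    x.continuous.comp <| continuous_projIcc.comp <| continuous_const.add continuous_subtype_val⟩

/-- The uniform Lipschitz assumption on the coefficients:
`|b(φ)−b(ψ)|² + |σ(φ)−σ(ψ)|² ≤ κ₁ ‖φ−ψ‖²`. -/
def LipCoeff {d m : ℕ} {τ : ℝ} (b : Hist τ d → Vec d)
    (σ' : Hist τ d → Matrix (Fin d) (Fin m) ℝ) (κ₁ : ℝ) : Prop :=
  ∀ φ ψ : Hist τ d, ‖b φ - b ψ‖ ^ 2 + frobSq (σ' φ - σ' ψ) ≤ κ₁ * ‖φ - ψ‖ ^ 2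

/-- The linear growth bound `|b(φ)|² + |σ(φ)|² ≤ κ₂ (1 + ‖φ‖²)`. -/
def GrowthCoeff {d m : ℕ} {τ : ℝ} (b : Hist τ d → Vec d)
    (σ' : Hist τ d → Matrix (Fin d) (Fin m) ℝ) (κ₂ : ℝ) : Prop :=
  ∀ φ : Hist τ d, ‖b φ‖ ^ 2 + frobSq (σ' φ) ≤ κ₂ * (1 + ‖φ‖ ^ 2)

/-- The set `U_T(x)` of controls `u ∈ L²([0,T],ℝ^m)` satisfying
`x(t) = x(0) + ∫₀ᵗ b(x_s) ds + ∫₀ᵗ σ(x_s) u(s) ds` for `t ∈ [0,T]`. -/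
def controls {d m : ℕ} {τ T : ℝ} (h : -τ ≤ T) (b : Hist τ d → Vec d)
    (σ' : Hist τ d → Matrix (Fin d) (Fin m) ℝ) (x : Traj τ T d) : Set (ℝ → Vec m) :=
  {u | MemLp u 2 (volume.restrict (Icc 0 T)) ∧
    ∀ t ∈ Icc (0:ℝ) T,
      ev h x t = ev h x 0 + (∫ s in (0:ℝ)..t, b (seg h x s)) +
        ∫ s in (0:ℝ)..t, matVec (σ' (seg h x s)) (u s)}

/-- The rate function `I_T(x) = inf_{u ∈ U_T(x)} ½∫₀ᵀ |u(s)|² ds` (with value `∞` if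
`U_T(x) = ∅`). -/
def rate {d m : ℕ} {τ T : ℝ} (h : -τ ≤ T) (b : Hist τ d → Vec d)
    (σ' : Hist τ d → Matrix (Fin d) (Fin m) ℝ) (x : Traj τ T d) : ℝ≥0∞ :=
  ⨅ (u : ℝ → Vec m) (_ : u ∈ controls h b σ' x),
    ENNReal.ofReal ((1/2) * ∫ s in (0:ℝ)..T, ‖u s‖ ^ 2)

open Classical in
/-- The rate function `I_T^φ(x)`, which is `I_T(x)` if `x₀ = φ` and `∞` otherwise. -/
def rateAt {d m : ℕ} {τ T : ℝ} (h : -τ ≤ T) (b : Hist τ d → Vec d)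
    (σ' : Hist τ d → Matrix (Fin d) (Fin m) ℝ) (φ : Hist τ d) (x : Traj τ T d) : ℝ≥0∞ :=
  if seg h x 0 = φ then rate h b σ' x else ⊤

/-- The supremum norm `‖x‖_{[-τ,t]} = sup_{s ∈ [-τ,t]} |x(s)|` of a path. -/
def supNormOn {d : ℕ} {τ T : ℝ} (h : -τ ≤ T) (x : Traj τ T d) (t : ℝ) : ℝ :=
  sSup ((fun s => ‖ev h x s‖) '' Icc (-τ) t)

section helpers
variable {d m : ℕ} {τ T : ℝ} (h : -τ ≤ T)

lemma frobSq_nonneg {M : Matrix (Fin d) (Fin m) ℝ} : 0 ≤ frobSq M := by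
  apply Finset.sum_nonneg; intros; apply Finset.sum_nonneg; intros; positivity

lemma frobNorm_nonneg {M : Matrix (Fin d) (Fin m) ℝ} : 0 ≤ frobNorm M := Real.sqrt_nonneg _

lemma frobNorm_sq {M : Matrix (Fin d) (Fin m) ℝ} : frobNorm M ^ 2 = frobSq M :=
  Real.sq_sqrt frobSq_nonneg

lemma norm_matVec_le (M : Matrix (Fin d) (Fin m) ℝ) (v : Vec m) :
    ‖matVec M v‖ ≤ frobNorm M * ‖v‖ := by
  have hsq : ‖matVec M v‖ ^ 2 ≤ frobSq M * ‖v‖ ^ 2 := by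
    have hv : ‖v‖ ^ 2 = ∑ j, (v j) ^ 2 := by
      rw [EuclideanSpace.norm_eq, Real.sq_sqrt (by positivity)]
      simp [sq_abs]
    have hm : ‖matVec M v‖ ^ 2 = ∑ i, (∑ j, M i j * v j) ^ 2 := by
      rw [EuclideanSpace.norm_eq, Real.sq_sqrt (by positivity)]
      simp [matVec, sq_abs]
    rw [hm, hv, frobSq, Finset.sum_mul]
    exact Finset.sum_le_sum fun i _ => Finset.sum_mul_sq_le_sq_mul_sq _ _ _
  calc ‖matVec M v‖ = Real.sqrt (‖matVec M v‖ ^ 2) := (Real.sqrt_sq (norm_nonneg _)).symm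
    _ ≤ Real.sqrt (frobSq M * ‖v‖ ^ 2) := Real.sqrt_le_sqrt hsq
    _ = frobNorm M * ‖v‖ := by
        rw [Real.sqrt_mul frobSq_nonneg, Real.sqrt_sq (norm_nonneg _)]; rfl

lemma ev_continuous (x : Traj τ T d) : Continuous (ev h x) :=
  x.continuous.comp continuous_projIcc

lemma ev_uniformContinuous (x : Traj τ T d) : UniformContinuous (ev h x) :=
  (CompactSpace.uniformContinuous_of_continuous x.continuous).comp
    (LipschitzWith.projIcc h).uniformContinuous

lemma norm_ev_le_supNormOn (x : Traj τ T d) {p t : ℝ} (hp : p ∈ Icc (-τ) t) :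
    ‖ev h x p‖ ≤ supNormOn h x t :=
  le_csSup ((isCompact_Icc.image_of_continuousOn
    ((continuous_norm.comp (ev_continuous h x)).continuousOn)).bddAbove) ⟨p, hp, rfl⟩

lemma supNormOn_nonneg (x : Traj τ T d) {t : ℝ} (ht : -τ ≤ t) : 0 ≤ supNormOn h x t :=
  (norm_nonneg _).trans (norm_ev_le_supNormOn h x ⟨ht, le_refl t⟩)

lemma supNormOn_le (x : Traj τ T d) {t C : ℝ} (hC : 0 ≤ C)
    (hb : ∀ p ∈ Icc (-τ) t, ‖ev h x p‖ ≤ C) : supNormOn h x t ≤ C :=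
  Real.sSup_le (by rintro _ ⟨p, hp, rfl⟩; exact hb p hp) hC

lemma supNormOn_continuousAt (x : Traj τ T d) {r : ℝ} (hr : -τ < r) :
    ContinuousAt (fun t => supNormOn h x t) r := by
  rw [Metric.continuousAt_iff]
  intro ε hε
  obtain ⟨δ₁, hδ₁, hδ₁'⟩ := Metric.uniformContinuous_iff.mp (ev_uniformContinuous h x)
    (ε/2) (half_pos hε)
  refine ⟨min δ₁ (r + τ), lt_min hδ₁ (by linarith), fun {t} ht => ?_⟩
  have key : ∀ a b' : ℝ, -τ ≤ a → a ≤ b' → b' - a < δ₁ →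
      supNormOn h x b' ≤ supNormOn h x a + ε/2 := by
    intro a b' ha hab hd
    refine supNormOn_le h x (by have := supNormOn_nonneg h x ha; linarith) fun p hp => ?_
    rcases le_or_gt p a with hpa | hpa
    · exact (norm_ev_le_supNormOn h x ⟨hp.1, hpa⟩).trans (by linarith)
    · have hdist : dist p a < δ₁ := by
        rw [Real.dist_eq, abs_of_pos (by linarith)]
        have := hp.2; linarith
      have h2 := hδ₁' hdist
      calc ‖ev h x p‖ ≤ ‖ev h x a‖ + dist (ev h x p) (ev h x a) := by
            rw [dist_eq_norm]
            have := norm_sub_norm_le (ev h x p) (ev h x a); linarith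
        _ ≤ supNormOn h x a + ε/2 :=
            add_le_add (norm_ev_le_supNormOn h x ⟨ha, le_refl a⟩) h2.le
  have hmono : ∀ a b' : ℝ, -τ ≤ a → a ≤ b' → supNormOn h x a ≤ supNormOn h x b' := by
    intro a b' ha hab
    refine csSup_le_csSup ((isCompact_Icc.image_of_continuousOn
      ((continuous_norm.comp (ev_continuous h x)).continuousOn)).bddAbove) ?_
      (image_mono (Icc_subset_Icc_right hab))
    exact (nonempty_Icc.mpr ha).image _
  rw [Real.dist_eq] at ht ⊢
  have htr : |t - r| < δ₁ := lt_of_lt_of_le ht (min_le_left _ _)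
  have htτ : -τ < t := by
    have := abs_lt.mp (lt_of_lt_of_le ht (min_le_right _ _)); linarith
  rcases le_total t r with htr' | htr'
  · have h1 := key t r htτ.le htr' (by have := abs_lt.mp htr; linarith)
    have h2 := hmono t r htτ.le htr'
    rw [abs_lt]; constructor <;> linarith
  · have h1 := key r t hr.le htr' (by have := abs_lt.mp htr; linarith)
    have h2 := hmono r t hr.le htr'
    rw [abs_lt]; constructor <;> linarith

end helpers
section helpers2
variable {d m : ℕ} {τ T : ℝ} (h : -τ ≤ T)

lemma isFiniteIoc (a b' : ℝ) : IsFiniteMeasure (volume.restrict (Ioc a b')) :=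
  ⟨by rw [Measure.restrict_apply_univ]; exact measure_Ioc_lt_top⟩

/-- Cauchy-Schwarz for integrals, squared form. -/
lemma cs_sq {μ : Measure ℝ} {f g : ℝ → ℝ} (hf0 : ∀ s, 0 ≤ f s) (hg0 : ∀ s, 0 ≤ g s)
    (hf : MemLp f 2 μ) (hg : MemLp g 2 μ) :
    (∫ s, f s * g s ∂μ) ^ 2 ≤ (∫ s, f s ^ 2 ∂μ) * ∫ s, g s ^ 2 ∂μ := by
  have hpq : Real.HolderConjugate 2 2 := Real.HolderConjugate.two_two
  have h2 : ENNReal.ofReal (2:ℝ) = 2 := by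
    simp [ENNReal.ofReal_ofNat]
  have key := integral_mul_le_Lp_mul_Lq_of_nonneg hpq (μ := μ)
    (Filter.Eventually.of_forall hf0) (Filter.Eventually.of_forall hg0)
    (h2 ▸ hf) (h2 ▸ hg)
  have hrw : ∀ w : ℝ → ℝ, ∫ s, w s ^ (2:ℝ) ∂μ = ∫ s, w s ^ 2 ∂μ := by
    intro w; apply integral_congr_ae; filter_upwards with s
    rw [show (2:ℝ) = ((2:ℕ):ℝ) by norm_num, Real.rpow_natCast]
  rw [hrw f, hrw g] at key
  have hA : 0 ≤ ∫ s, f s ^ 2 ∂μ := integral_nonneg fun s => sq_nonneg _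
  have hB : 0 ≤ ∫ s, g s ^ 2 ∂μ := integral_nonneg fun s => sq_nonneg _
  have hL : 0 ≤ ∫ s, f s * g s ∂μ := integral_nonneg fun s => mul_nonneg (hf0 s) (hg0 s)
  calc (∫ s, f s * g s ∂μ) ^ 2
      ≤ ((∫ s, f s ^ 2 ∂μ) ^ (1/2:ℝ) * (∫ s, g s ^ 2 ∂μ) ^ (1/2:ℝ)) ^ 2 :=
        pow_le_pow_left₀ hL key 2
    _ = (∫ s, f s ^ 2 ∂μ) * ∫ s, g s ^ 2 ∂μ := by
        rw [mul_pow, ← Real.rpow_natCast (_ ^ (1/2:ℝ)) 2, ← Real.rpow_natCast (_ ^ (1/2:ℝ)) 2,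
          ← Real.rpow_mul hA, ← Real.rpow_mul hB]
        norm_num

lemma memL2_restrict_of_continuous {w : ℝ → ℝ} (hw : Continuous w) (a b' : ℝ) :
    MemLp w 2 (volume.restrict (Ioc a b')) := by
  haveI := isFiniteIoc a b'
  obtain ⟨C, hC⟩ := (isCompact_Icc (a := a) (b := b')).exists_bound_of_continuousOn
    hw.continuousOn
  exact MemLp.of_bound hw.aestronglyMeasurable C
    (by filter_upwards [ae_restrict_mem measurableSet_Ioc] with s hs
        exact hC s (Ioc_subset_Icc_self hs))

lemma gron_final {K A r : ℝ} (hK : 0 ≤ K) (hA : 0 ≤ A) (hr : 0 ≤ r) :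
    K * gronwallBound 0 K A r + A ≤ A * Real.exp (K * r) := by
  rcases eq_or_lt_of_le hK with hK0 | hK0
  · rw [← hK0, gronwallBound_K0]
    simp [Real.exp_nonneg]
  · rw [gronwallBound_of_K_ne_0 hK0.ne']
    have : Real.exp (K * r) = Real.exp (K * r) := rfl
    field_simp
    ring_nf
    exact le_refl _

end helpers2
section helpers3
variable {d m : ℕ} {τ T : ℝ} (h : -τ ≤ T)
variable {b : Hist τ d → Vec d} {σ' : Hist τ d → Matrix (Fin d) (Fin m) ℝ} {κ₁ κ₂ : ℝ}

lemma seg_continuous (x : Traj τ T d) : Continuous (fun s => seg h x s) := by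
  apply ContinuousMap.continuous_of_continuous_uncurry
  exact x.continuous.comp <| continuous_projIcc.comp <|
    (continuous_fst.add (continuous_subtype_val.comp continuous_snd))

lemma norm_b_sub_le (hlip : LipCoeff b σ' κ₁) (hκ₁ : 0 < κ₁) (φ ψ : Hist τ d) :
    ‖b φ - b ψ‖ ≤ Real.sqrt κ₁ * ‖φ - ψ‖ := by
  have h1 : ‖b φ - b ψ‖ ^ 2 ≤ κ₁ * ‖φ - ψ‖ ^ 2 := by
    have := hlip φ ψ; have := frobSq_nonneg (M := σ' φ - σ' ψ); linarith
  calc ‖b φ - b ψ‖ = Real.sqrt (‖b φ - b ψ‖ ^ 2) := (Real.sqrt_sq (norm_nonneg _)).symm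
    _ ≤ Real.sqrt (κ₁ * ‖φ - ψ‖ ^ 2) := Real.sqrt_le_sqrt h1
    _ = Real.sqrt κ₁ * ‖φ - ψ‖ := by
        rw [Real.sqrt_mul hκ₁.le, Real.sqrt_sq (norm_nonneg _)]

lemma b_continuous (hlip : LipCoeff b σ' κ₁) (hκ₁ : 0 < κ₁) : Continuous b := by
  apply (LipschitzWith.of_dist_le_mul (K := Real.toNNReal (Real.sqrt κ₁))
    (f := b) ?_).continuous
  intro φ ψ
  rw [dist_eq_norm, dist_eq_norm, Real.coe_toNNReal _ (Real.sqrt_nonneg _)]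
  exact norm_b_sub_le hlip hκ₁ φ ψ

lemma entry_abs_le_frobNorm (M : Matrix (Fin d) (Fin m) ℝ) (i : Fin d) (j : Fin m) :
    |M i j| ≤ frobNorm M := by
  have h1 : (M i j) ^ 2 ≤ frobSq M := by
    calc (M i j) ^ 2 ≤ ∑ j', (M i j') ^ 2 :=
          Finset.single_le_sum (f := fun j' => (M i j') ^ 2)
            (fun j' _ => sq_nonneg _) (Finset.mem_univ j)
      _ ≤ frobSq M :=
          Finset.single_le_sum (f := fun i' => ∑ j', (M i' j') ^ 2)
            (fun i' _ => Finset.sum_nonneg fun j' _ => sq_nonneg _) (Finset.mem_univ i)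
  calc |M i j| = Real.sqrt ((M i j) ^ 2) := (Real.sqrt_sq_eq_abs _).symm
    _ ≤ frobNorm M := Real.sqrt_le_sqrt h1

lemma sigma_entry_continuous (hlip : LipCoeff b σ' κ₁) (hκ₁ : 0 < κ₁) (i : Fin d) (j : Fin m) :
    Continuous (fun φ => σ' φ i j) := by
  apply (LipschitzWith.of_dist_le_mul (K := Real.toNNReal (Real.sqrt κ₁))
    (f := fun φ => σ' φ i j) ?_).continuous
  intro φ ψ
  rw [Real.dist_eq, dist_eq_norm, Real.coe_toNNReal _ (Real.sqrt_nonneg _)]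
  have h1 : |σ' φ i j - σ' ψ i j| ≤ frobNorm (σ' φ - σ' ψ) := by
    have := entry_abs_le_frobNorm (σ' φ - σ' ψ) i j
    simpa [Matrix.sub_apply] using this
  have h2 : frobSq (σ' φ - σ' ψ) ≤ κ₁ * ‖φ - ψ‖ ^ 2 := by
    have := hlip φ ψ; have := sq_nonneg ‖b φ - b ψ‖; linarith
  calc |σ' φ i j - σ' ψ i j| ≤ frobNorm (σ' φ - σ' ψ) := h1
    _ ≤ Real.sqrt (κ₁ * ‖φ - ψ‖ ^ 2) := Real.sqrt_le_sqrt h2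
    _ = Real.sqrt κ₁ * ‖φ - ψ‖ := by
        rw [Real.sqrt_mul hκ₁.le, Real.sqrt_sq (norm_nonneg _)]

lemma frobSq_seg_continuous (hlip : LipCoeff b σ' κ₁) (hκ₁ : 0 < κ₁) (x : Traj τ T d) :
    Continuous (fun s => frobSq (σ' (seg h x s))) := by
  unfold frobSq
  apply continuous_finset_sum; intro i _
  apply continuous_finset_sum; intro j _
  exact (((sigma_entry_continuous hlip hκ₁ i j).comp (seg_continuous h x)).pow 2)

lemma norm_seg_le (x : Traj τ T d) {s t : ℝ} (hτ : 0 ≤ τ) (hs : 0 ≤ s) (hst : s ≤ t) :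
    ‖seg h x s‖ ≤ supNormOn h x t := by
  rw [ContinuousMap.norm_le _ (supNormOn_nonneg h x (by linarith))]
  · intro q
    obtain ⟨hq1, hq2⟩ := q.2
    exact norm_ev_le_supNormOn h x (p := s + q.1)
      (Set.mem_Icc.mpr ⟨by linarith, by linarith⟩)
end helpers3

set_option maxHeartbeats 2000000 in
/-- Lemma 4.2: if `I_T^φ(x) < ∞` then for all `t ∈ [0,T]`,
`‖x − x^φ‖²_{[-τ,t]} ≤ 4 I_T^φ(x) κ₂ (1 + ‖x‖²_{[-τ,t]}) t exp(2κ₁ t²)`. -/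
theorem stmt_1 {d m : ℕ} (hd : 0 < d) (hm : 0 < m) {τ T : ℝ} (hτ : 0 < τ) (hT : 0 < T)
    (h : -τ ≤ T)
    (b : Hist τ d → Vec d) (σ' : Hist τ d → Matrix (Fin d) (Fin m) ℝ)
    {κ₁ κ₂ : ℝ} (hκ₁ : 0 < κ₁) (hκ₂ : 0 < κ₂)
    (hlip : LipCoeff b σ' κ₁) (hgrowth : GrowthCoeff b σ' κ₂)
    (φ : Hist τ d)
    (xφ : Traj τ T d) (hxφ0 : seg h xφ 0 = φ)
    (hxφ : ∀ t ∈ Icc (0:ℝ) T, ev h xφ t = ev h xφ 0 + ∫ s in (0:ℝ)..t, b (seg h xφ s))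
    (x : Traj τ T d) (hfin : rateAt h b σ' φ x < ⊤) :
    ∀ t ∈ Icc (0:ℝ) T,
      supNormOn h (x - xφ) t ^ 2 ≤
        4 * (rateAt h b σ' φ x).toReal * κ₂ * (1 + supNormOn h x t ^ 2) * t *
          Real.exp (2 * κ₁ * t ^ 2) := by
  intro t₀ ht₀
  obtain ⟨ht₀0, ht₀T⟩ := ht₀
  have hτ0 : (0:ℝ) ≤ τ := hτ.le
  have hτT : -τ ≤ (0:ℝ) := by linarith
  have hseg : seg h x 0 = φ := by
    by_contra hc
    rw [rateAt, if_neg hc] at hfin; exact absurd hfin (lt_irrefl _)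
  have hrate : rate h b σ' x < ⊤ := by rwa [rateAt, if_pos hseg] at hfin
  have hrateAtEq : rateAt h b σ' φ x = rate h b σ' x := by rw [rateAt, if_pos hseg]
  set I := (rateAt h b σ' φ x).toReal with hIdef
  have hI0 : 0 ≤ I := ENNReal.toReal_nonneg
  set y : Traj τ T d := x - xφ with hy
  have hy0 : ∀ p ∈ Icc (-τ) (0:ℝ), ev h x p = ev h xφ p := by
    intro p hp
    have h1 : seg h x 0 = seg h xφ 0 := by rw [hseg, hxφ0]
    have := ContinuousMap.congr_fun h1 ⟨p, hp⟩
    simpa [seg, ev, zero_add] using this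
  have hevy : ∀ p : ℝ, ev h y p = ev h x p - ev h xφ p := fun p => by
    simp [hy, ev, ContinuousMap.sub_apply]
  set M : ℝ → ℝ := fun s => supNormOn h y s with hM
  set f : ℝ → ℝ := fun s => M s ^ 2 with hf
  set g : ℝ → ℝ := fun r => ∫ s in (0:ℝ)..r, f s with hg
  set S : ℝ := supNormOn h x t₀ ^ 2 with hS
  have hS0 : 0 ≤ S := sq_nonneg _
  set K : ℝ := 2 * κ₁ * t₀ with hK
  have hK0 : 0 ≤ K := by positivity
  have hf0 : ∀ s, 0 ≤ f s := fun s => sq_nonneg _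
  have hfc : ∀ r : ℝ, -τ < r → ContinuousAt f r := fun r hr =>
    (supNormOn_continuousAt h y hr).pow 2
  have hfint : ∀ r : ℝ, 0 ≤ r → IntervalIntegrable f volume 0 r := by
    intro r hr
    apply ContinuousOn.intervalIntegrable
    rw [uIcc_of_le hr]
    exact fun s hs => (hfc s (by linarith [hs.1])).continuousWithinAt
  have hgd : ∀ r ∈ Icc (0:ℝ) t₀, HasDerivAt g (f r) r := by
    intro r hr
    refine intervalIntegral.integral_hasDerivAt_right (hfint r hr.1) ?_
      (hfc r (by linarith [hr.1]))
    exact ContinuousAt.stronglyMeasurableAtFilter (isOpen_Ioi (a := -τ))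
      (fun s hs => hfc s hs) r (by simp only [mem_Ioi]; linarith [hr.1])
  have hg0 : ∀ r : ℝ, 0 ≤ r → 0 ≤ g r := fun r hr =>
    intervalIntegral.integral_nonneg hr fun s _ => hf0 s
  have hfIocInt : ∀ r : ℝ, 0 ≤ r → IntegrableOn f (Ioc 0 r) volume := by
    intro r hr
    exact (hfint r hr).1
  have hMnn : ∀ s : ℝ, 0 ≤ s → 0 ≤ M s := fun s hs => supNormOn_nonneg h y (by linarith)
  -- Key estimate for each ε > 0
  have key : ∀ ε : ℝ, 0 < ε →
      f t₀ ≤ 4 * (I + ε) * κ₂ * (1 + S) * t₀ * Real.exp (2 * κ₁ * t₀ ^ 2) := by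
    intro ε hε
    -- choose a control u with value close to the rate
    have hlt : rate h b σ' x < rate h b σ' x + ENNReal.ofReal ε :=
      ENNReal.lt_add_right hrate.ne (by simpa using (ENNReal.ofReal_pos.mpr hε).ne')
    have hlt2 : (⨅ (u : ℝ → Vec m) (_ : u ∈ controls h b σ' x),
        ENNReal.ofReal ((1/2) * ∫ s in (0:ℝ)..T, ‖u s‖ ^ 2)) <
        rate h b σ' x + ENNReal.ofReal ε := hlt
    rw [iInf_lt_iff] at hlt2
    obtain ⟨u, hlt3⟩ := hlt2
    rw [iInf_lt_iff] at hlt3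
    obtain ⟨hu, hval⟩ := hlt3
    -- value bound
    have hrateI : rate h b σ' x = ENNReal.ofReal I := by
      rw [hIdef, hrateAtEq, ENNReal.ofReal_toReal hrate.ne]
    have hhalf0 : 0 ≤ (1/2) * ∫ s in (0:ℝ)..T, ‖u s‖ ^ 2 := by
      have : 0 ≤ ∫ s in (0:ℝ)..T, ‖u s‖ ^ 2 :=
        intervalIntegral.integral_nonneg hT.le fun s _ => sq_nonneg _
      linarith
    have huT : ∫ s in Icc (0:ℝ) T, ‖u s‖ ^ 2 ≤ 2 * (I + ε) := by
      rw [hrateI, ← ENNReal.ofReal_add hI0 hε.le] at hval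
      have h1 := (ENNReal.ofReal_lt_ofReal_iff_of_nonneg hhalf0).mp hval
      have h2 : ∫ s in Icc (0:ℝ) T, ‖u s‖ ^ 2 = ∫ s in (0:ℝ)..T, ‖u s‖ ^ 2 := by
        rw [intervalIntegral.integral_of_le hT.le, integral_Icc_eq_integral_Ioc]
      rw [h2]; linarith
    -- u is square-integrable on subintervals
    have hun2 : ∀ p : ℝ, 0 ≤ p → p ≤ T →
        MemLp (fun s => ‖u s‖) 2 (volume.restrict (Ioc 0 p)) := by
      intro p hp0 hpT
      exact (hu.1.norm).mono_measure
        (Measure.restrict_mono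
          (show Ioc (0:ℝ) p ⊆ Icc 0 T from fun s hs => ⟨hs.1.le, hs.2.trans hpT⟩) le_rfl)
    have husq_int : Integrable (fun s => ‖u s‖ ^ 2) (volume.restrict (Icc 0 T)) :=
      hu.1.norm.integrable_sq
    have hbx : Continuous fun s => b (seg h x s) :=
      (b_continuous hlip hκ₁).comp (seg_continuous h x)
    have hbxφ : Continuous fun s => b (seg h xφ s) :=
      (b_continuous hlip hκ₁).comp (seg_continuous h xφ)
    have hfrobc : Continuous fun s => frobNorm (σ' (seg h x s)) :=
      Real.continuous_sqrt.comp (frobSq_seg_continuous h hlip hκ₁ x)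
    set A : ℝ := 4 * (I + ε) * κ₂ * (1 + S) * t₀ with hA
    have hA0 : 0 ≤ A := by
      have h1 : 0 ≤ I + ε := by linarith
      have h2 : 0 ≤ 1 + S := by linarith
      have h3 := mul_nonneg (mul_nonneg (mul_nonneg
        (mul_nonneg (by norm_num : (0:ℝ) ≤ 4) h1) hκ₂.le) h2) ht₀0
      rw [hA]; exact h3
    have Est : ∀ r ∈ Icc (0:ℝ) t₀, f r ≤ K * g r + A := by
      intro r hrmem
      obtain ⟨hr0, hrt⟩ := hrmem
      have hgr0 : 0 ≤ g r := hg0 r hr0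
      have hKA0 : 0 ≤ K * g r + A := add_nonneg (mul_nonneg hK0 hgr0) hA0
      have main : ∀ p ∈ Icc (-τ) r, ‖ev h y p‖ ≤ Real.sqrt (K * g r + A) := by
        intro p hpmem
        obtain ⟨hpτ, hpr⟩ := hpmem
        rcases le_or_gt p 0 with hp0 | hp0
        · have hz : ev h y p = 0 := by rw [hevy p, hy0 p ⟨hpτ, hp0⟩, sub_self]
          rw [hz, norm_zero]; exact Real.sqrt_nonneg _
        · have hpT : p ∈ Icc (0:ℝ) T := ⟨hp0.le, by linarith⟩
          haveI := isFiniteIoc (0:ℝ) p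
          have hBint1 : IntervalIntegrable (fun s => b (seg h x s)) volume 0 p :=
            hbx.intervalIntegrable 0 p
          have hBint2 : IntervalIntegrable (fun s => b (seg h xφ s)) volume 0 p :=
            hbxφ.intervalIntegrable 0 p
          set Sg : Vec d := ∫ s in (0:ℝ)..p, matVec (σ' (seg h x s)) (u s) with hSg
          set B1 : Vec d := ∫ s in (0:ℝ)..p, (b (seg h x s) - b (seg h xφ s)) with hB1
          have hev0 : ev h x 0 = ev h xφ 0 := hy0 0 ⟨hτT, le_refl 0⟩
          have hiden : ev h y p = B1 + Sg := by
            rw [hevy p, hu.2 p hpT, hxφ p hpT, hev0, hB1,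
              intervalIntegral.integral_sub hBint1 hBint2]
            abel
          -- B1 bound
          have hbdc : Continuous fun s => ‖b (seg h x s) - b (seg h xφ s)‖ :=
            (hbx.sub hbxφ).norm
          have hB1n : ‖B1‖ ≤ ∫ s in Ioc (0:ℝ) p, ‖b (seg h x s) - b (seg h xφ s)‖ := by
            rw [hB1, ← intervalIntegral.integral_of_le hp0.le]
            exact intervalIntegral.norm_integral_le_integral_norm hp0.le
          have hcs1 := cs_sq (μ := volume.restrict (Ioc 0 p)) (f := fun _ => (1:ℝ))
            (g := fun s => ‖b (seg h x s) - b (seg h xφ s)‖) (fun _ => zero_le_one)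
            (fun s => norm_nonneg _) (memLp_const 1)
            (memL2_restrict_of_continuous hbdc 0 p)
          have hone : ∫ _s in Ioc (0:ℝ) p, (1:ℝ) = p := by
            simp [Real.volume_Ioc, ENNReal.toReal_ofReal hp0.le, hp0.le]
          have hbdsq : ∫ s in Ioc (0:ℝ) p, ‖b (seg h x s) - b (seg h xφ s)‖ ^ 2 ≤ κ₁ * g r := by
            have hpoint : ∀ s ∈ Ioc (0:ℝ) p,
                ‖b (seg h x s) - b (seg h xφ s)‖ ^ 2 ≤ κ₁ * f s := by
              intro s hs
              have hl := hlip (seg h x s) (seg h xφ s)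
              have hfr := frobSq_nonneg (M := σ' (seg h x s) - σ' (seg h xφ s))
              have hsegy : seg h x s - seg h xφ s = seg h y s := by
                ext q; simp [seg, hy, ContinuousMap.sub_apply]
              have hns : ‖seg h y s‖ ≤ M s := norm_seg_le h y hτ0 hs.1.le (le_refl s)
              have hsq : ‖seg h x s - seg h xφ s‖ ^ 2 ≤ f s := by
                rw [hsegy, hf]
                exact pow_le_pow_left₀ (norm_nonneg _) hns 2
              nlinarith [hκ₁.le]
            have hint1 : IntegrableOn (fun s => ‖b (seg h x s) - b (seg h xφ s)‖ ^ 2)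
                (Ioc 0 p) volume := (hbdc.pow 2).integrableOn_Ioc
            have hint2 : IntegrableOn (fun s => κ₁ * f s) (Ioc 0 p) volume :=
              (hfIocInt p hp0.le).const_mul κ₁
            calc ∫ s in Ioc (0:ℝ) p, ‖b (seg h x s) - b (seg h xφ s)‖ ^ 2
                ≤ ∫ s in Ioc (0:ℝ) p, κ₁ * f s :=
                  setIntegral_mono_on hint1 hint2 measurableSet_Ioc hpoint
              _ = κ₁ * ∫ s in Ioc (0:ℝ) p, f s := by
                  rw [MeasureTheory.integral_const_mul]
              _ ≤ κ₁ * ∫ s in Ioc (0:ℝ) r, f s := by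
                  refine mul_le_mul_of_nonneg_left ?_ hκ₁.le
                  exact setIntegral_mono_set (hfIocInt r hr0)
                    (Filter.Eventually.of_forall fun s => hf0 s)
                    ((Ioc_subset_Ioc_right hpr).eventuallyLE)
              _ = κ₁ * g r := by
                  simp only [hg]; rw [intervalIntegral.integral_of_le hr0]
          have hB1sq : 2 * ‖B1‖ ^ 2 ≤ K * g r := by
            simp only [one_mul, one_pow] at hcs1
            rw [hone] at hcs1
            have h2 : ‖B1‖^2 ≤ p * (κ₁ * g r) := by
              calc ‖B1‖^2 ≤ (∫ s in Ioc (0:ℝ) p, ‖b (seg h x s) - b (seg h xφ s)‖)^2 :=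
                    pow_le_pow_left₀ (norm_nonneg _) hB1n 2
                _ ≤ p * ∫ s in Ioc (0:ℝ) p, ‖b (seg h x s) - b (seg h xφ s)‖^2 := hcs1
                _ ≤ p * (κ₁ * g r) := mul_le_mul_of_nonneg_left hbdsq hp0.le
            have h3 : p * (κ₁ * g r) ≤ t₀ * (κ₁ * g r) :=
              mul_le_mul_of_nonneg_right (by linarith) (mul_nonneg hκ₁.le hgr0)
            rw [hK]; linarith
          -- Σ bound
          have hSgn : ‖Sg‖ ≤ ∫ s in Ioc (0:ℝ) p, frobNorm (σ' (seg h x s)) * ‖u s‖ := by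
            have hn1 : ‖Sg‖ ≤ ∫ s in Ioc (0:ℝ) p, ‖matVec (σ' (seg h x s)) (u s)‖ := by
              rw [hSg, ← intervalIntegral.integral_of_le hp0.le]
              exact intervalIntegral.norm_integral_le_integral_norm hp0.le
            refine hn1.trans (integral_mono_of_nonneg
              (Filter.Eventually.of_forall fun s => norm_nonneg _) ?_
              (Filter.Eventually.of_forall fun s => norm_matVec_le _ _))
            have huint1 : Integrable (fun s => ‖u s‖) (volume.restrict (Ioc 0 p)) :=
              memLp_one_iff_integrable.mp
                ((hun2 p hp0.le hpT.2).mono_exponent one_le_two)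
            refine huint1.bdd_mul hfrobc.aestronglyMeasurable
              (c := Real.sqrt (κ₂ * (1 + ‖x‖ ^ 2))) (Filter.Eventually.of_forall fun s => ?_)
            have hgw := hgrowth (seg h x s)
            have hb2 := sq_nonneg ‖b (seg h x s)‖
            have hsegx : ‖seg h x s‖ ≤ ‖x‖ := by
              rw [ContinuousMap.norm_le _ (norm_nonneg x)]
              intro q; exact ContinuousMap.norm_coe_le_norm x _
            have hxx : ‖seg h x s‖^2 ≤ ‖x‖^2 :=
              pow_le_pow_left₀ (norm_nonneg _) hsegx 2
            have hfs : frobSq (σ' (seg h x s)) ≤ κ₂ * (1 + ‖x‖^2) := by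
              nlinarith [hκ₂.le]
            rw [Real.norm_of_nonneg frobNorm_nonneg]
            exact Real.sqrt_le_sqrt hfs
          have hcs2 := cs_sq (μ := volume.restrict (Ioc 0 p))
            (f := fun s => frobNorm (σ' (seg h x s))) (g := fun s => ‖u s‖)
            (fun s => frobNorm_nonneg) (fun s => norm_nonneg _)
            (memL2_restrict_of_continuous hfrobc 0 p) (hun2 p hp0.le hpT.2)
          have hfrob_int : ∫ s in Ioc (0:ℝ) p, frobNorm (σ' (seg h x s)) ^ 2
              ≤ κ₂ * (1 + S) * p := by
            have hpoint : ∀ s ∈ Ioc (0:ℝ) p,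
                frobNorm (σ' (seg h x s)) ^ 2 ≤ κ₂ * (1 + S) := by
              intro s hs
              rw [frobNorm_sq]
              have hgw := hgrowth (seg h x s)
              have hb2 := sq_nonneg ‖b (seg h x s)‖
              have hns : ‖seg h x s‖ ≤ supNormOn h x t₀ :=
                norm_seg_le h x hτ0 hs.1.le (hs.2.trans (hpr.trans hrt))
              have hsq : ‖seg h x s‖^2 ≤ S := by
                rw [hS]; exact pow_le_pow_left₀ (norm_nonneg _) hns 2
              nlinarith
            calc ∫ s in Ioc (0:ℝ) p, frobNorm (σ' (seg h x s)) ^ 2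
                ≤ ∫ _s in Ioc (0:ℝ) p, κ₂ * (1 + S) :=
                  setIntegral_mono_on ((hfrobc.pow 2).integrableOn_Ioc)
                    (integrableOn_const measure_Ioc_lt_top.ne)
                    measurableSet_Ioc hpoint
              _ = κ₂ * (1 + S) * p := by
                  rw [setIntegral_const]
                  simp [Real.volume_Ioc, ENNReal.toReal_ofReal hp0.le, max_eq_left hp0.le]
                  ring
          have husqp : ∫ s in Ioc (0:ℝ) p, ‖u s‖ ^ 2 ≤ 2 * (I + ε) := by
            refine le_trans (setIntegral_mono_set husq_int
              (Filter.Eventually.of_forall fun s => sq_nonneg _)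
              (HasSubset.Subset.eventuallyLE
                (show Ioc (0:ℝ) p ⊆ Icc 0 T from fun s hs =>
                  ⟨hs.1.le, hs.2.trans hpT.2⟩))) huT
          have hSgsq : 2 * ‖Sg‖ ^ 2 ≤ A := by
            have h3 : 0 ≤ ∫ s in Ioc (0:ℝ) p, ‖u s‖^2 :=
              integral_nonneg fun s => sq_nonneg _
            have h4 : 0 ≤ κ₂ * (1 + S) * p := by positivity
            have h1 : ‖Sg‖^2 ≤ (κ₂ * (1+S) * p) * (2 * (I + ε)) := by
              calc ‖Sg‖^2
                  ≤ (∫ s in Ioc (0:ℝ) p, frobNorm (σ' (seg h x s)) * ‖u s‖)^2 :=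
                    pow_le_pow_left₀ (norm_nonneg _) hSgn 2
                _ ≤ (∫ s in Ioc (0:ℝ) p, frobNorm (σ' (seg h x s))^2) *
                      ∫ s in Ioc (0:ℝ) p, ‖u s‖^2 := hcs2
                _ ≤ (κ₂*(1+S)*p) * (2*(I+ε)) :=
                    mul_le_mul hfrob_int husqp h3 h4
            have hc1 : 0 ≤ 4*(I+ε)*κ₂*(1+S) := by
              have h5 : 0 ≤ I + ε := by linarith
              have h6 : 0 ≤ 1 + S := by linarith
              have := mul_nonneg (mul_nonneg
                (mul_nonneg (by norm_num : (0:ℝ) ≤ 4) h5) hκ₂.le) h6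
              linarith
            have h7 : 4*(I+ε)*κ₂*(1+S)*p ≤ 4*(I+ε)*κ₂*(1+S)*t₀ :=
              mul_le_mul_of_nonneg_left (by linarith) hc1
            rw [hA]; nlinarith [h1]
          -- combine
          have hnormsum : ‖ev h y p‖ ≤ ‖B1‖ + ‖Sg‖ := by
            rw [hiden]; exact norm_add_le _ _
          have hsq2 : ‖ev h y p‖^2 ≤ K * g r + A := by
            nlinarith [hnormsum, hB1sq, hSgsq, norm_nonneg B1, norm_nonneg Sg,
              norm_nonneg (ev h y p), sq_nonneg (‖B1‖ - ‖Sg‖)]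
          calc ‖ev h y p‖ = Real.sqrt (‖ev h y p‖^2) :=
                (Real.sqrt_sq (norm_nonneg _)).symm
            _ ≤ Real.sqrt (K * g r + A) := Real.sqrt_le_sqrt hsq2
      have hMr : M r ≤ Real.sqrt (K * g r + A) :=
        supNormOn_le h y (Real.sqrt_nonneg _) main
      calc f r = M r ^ 2 := rfl
        _ ≤ Real.sqrt (K * g r + A) ^ 2 := pow_le_pow_left₀ (hMnn r hr0) hMr 2
        _ = K * g r + A := Real.sq_sqrt hKA0
    -- Grönwall
    have hgron := norm_le_gronwallBound_of_norm_deriv_right_le (f := g) (f' := f)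
      (δ := 0) (K := K) (ε := A) (a := 0) (b := t₀)
      (fun r hr => (hgd r hr).continuousAt.continuousWithinAt)
      (fun r hr => (hgd r ⟨hr.1, hr.2.le⟩).hasDerivWithinAt)
      (by simp [hg])
      (fun r hr => by
        rw [Real.norm_of_nonneg (hf0 r), Real.norm_of_nonneg (hg0 r hr.1)]
        exact Est r ⟨hr.1, hr.2.le⟩)
      t₀ ⟨ht₀0, le_refl t₀⟩
    rw [Real.norm_of_nonneg (hg0 t₀ ht₀0), sub_zero] at hgron
    calc f t₀ ≤ K * g t₀ + A := Est t₀ ⟨ht₀0, le_refl t₀⟩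
      _ ≤ K * gronwallBound 0 K A t₀ + A := by
          have := mul_le_mul_of_nonneg_left hgron hK0; linarith
      _ ≤ A * Real.exp (K * t₀) := gron_final hK0 hA0 ht₀0
      _ = 4 * (I + ε) * κ₂ * (1 + S) * t₀ * Real.exp (2 * κ₁ * t₀ ^ 2) := by
          rw [hA, hK, show 2*κ₁*t₀*t₀ = 2*κ₁*t₀^2 from by ring]
  -- pass to the limit ε → 0
  set C : ℝ := 4 * κ₂ * (1 + S) * t₀ * Real.exp (2 * κ₁ * t₀ ^ 2) with hC
  have hC0 : 0 ≤ C := by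
    have h1 : 0 ≤ 1 + S := by linarith
    have h2 := mul_nonneg (mul_nonneg
      (mul_nonneg (by norm_num : (0:ℝ) ≤ 4) hκ₂.le) h1) ht₀0
    rw [hC]; exact mul_nonneg h2 (Real.exp_nonneg _)
  show f t₀ ≤ 4 * I * κ₂ * (1 + S) * t₀ * Real.exp (2 * κ₁ * t₀ ^ 2)
  refine le_of_forall_pos_le_add fun δ hδ => ?_
  have hεpos : 0 < δ / (C + 1) := by positivity
  have hkey := key _ hεpos
  have hexp : 4 * (I + δ/(C+1)) * κ₂ * (1 + S) * t₀ * Real.exp (2*κ₁*t₀^2)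
      = 4 * I * κ₂ * (1 + S) * t₀ * Real.exp (2*κ₁*t₀^2) + (δ/(C+1)) * C := by
    rw [hC]; ring
  have hfrac : (δ/(C+1)) * C ≤ δ := by
    have h1 : (δ/(C+1)) * C ≤ (δ/(C+1)) * (C+1) :=
      mul_le_mul_of_nonneg_left (by linarith) hεpos.le
    rw [div_mul_cancel₀ δ (by linarith : C + 1 ≠ 0)] at h1
    linarith
  rw [hexp] at hkey
  linarith
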